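/- Let G₁ = C_n ⋊ C_m = ⟨x,y | x^m = y^n = 1, y^x = y^k⟩ with k^m ≡ 1 mod n, and order the group elements as x^j y^i ↔ coordinate 1 + i + nj (0 ≤ i < n, 0 ≤ j < m). If (b_1,...,b_{mn}) ∈ C(v) for v ∈ F_q[G₁], then the vector obtained by cyclically shifting the j-th block (b_{1+nj},...,b_{n+nj}) by k^j mod n positions for each j = 0,...,m−1 also lies in C(v); and the vector obtained by cyclically shifting the m blocks of length n among themselves by one position also lies in C(v). -/

import Mathlib

/-- Theorem 3.1: for the group `G₁ = C_n ⋊ C_m = ⟨x,y | x^m = y^n = 1, x⁻¹yx = y^k⟩` (whose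
`mn` elements are the `x^j y^i`), if a codeword of `C(v)` has blocks `b_j = (coefficients at
x^j y^i, 0 ≤ i < n)`, then the vector whose j-th block is the cyclic shift of `b_j` by
`k^j mod n` positions is again a codeword, as is the vector whose blocks are the `b_j`
cyclically shifted among themselves by one position. -/
theorem codewords_of_semidirect_product (F : Type*) [Field F] [Fintype F]
    (G : Type*) [Group G] [Fintype G] [DecidableEq G]
    (m n k : ℕ) [NeZero m] [NeZero n] (x y : G)
    (hx : x ^ m = 1) (hy : y ^ n = 1) (hconj : x⁻¹ * y * x = y ^ k)
    (hk : k ^ m ≡ 1 [MOD n])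
    (hbij : Function.Bijective fun p : ZMod m × ZMod n => x ^ p.1.val * y ^ p.2.val)
    (v w : MonoidAlgebra F G)
    (hw : w ∈ Submodule.span F (Set.range fun g : G => MonoidAlgebra.single g (1 : F) * v)) :
    (∃ w₁ ∈ Submodule.span F (Set.range fun g : G => MonoidAlgebra.single g (1 : F) * v),
        ∀ (j : ZMod m) (i : ZMod n),
          w₁.coeff (x ^ j.val * y ^ i.val) = w.coeff (x ^ j.val * y ^ (i - (k : ZMod n) ^ j.val).val)) ∧
      ∃ w₂ ∈ Submodule.span F (Set.range fun g : G => MonoidAlgebra.single g (1 : F) * v),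
        ∀ (j : ZMod m) (i : ZMod n),
          w₂.coeff (x ^ j.val * y ^ i.val) = w.coeff (x ^ (j - 1).val * y ^ i.val) := by
  classical
  set S : Set (MonoidAlgebra F G) :=
    Set.range fun g : G => MonoidAlgebra.single g (1 : F) * v with hS
  -- the span is a left ideal
  have hclosed : ∀ g : G, ∀ u ∈ Submodule.span F S,
      MonoidAlgebra.single g (1 : F) * u ∈ Submodule.span F S := by
    intro g u hu
    have hmap : Submodule.map (LinearMap.mulLeft F (MonoidAlgebra.single g (1 : F)))
        (Submodule.span F S) ≤ Submodule.span F S := by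
      rw [Submodule.map_span, Submodule.span_le]
      rintro _ ⟨_, ⟨h, rfl⟩, rfl⟩
      refine Submodule.subset_span ⟨g * h, ?_⟩
      simp [LinearMap.mulLeft_apply, ← mul_assoc, MonoidAlgebra.single_mul_single]
    exact hmap ⟨u, hu, rfl⟩
  -- exponent congruences
  have ypow : ∀ a b : ℕ, (a : ZMod n) = (b : ZMod n) → y ^ a = y ^ b := by
    intro a b hab
    rw [ZMod.natCast_eq_natCast_iff] at hab
    rw [pow_eq_pow_mod a hy, pow_eq_pow_mod b hy, hab]
  have xpow : ∀ a b : ℕ, (a : ZMod m) = (b : ZMod m) → x ^ a = x ^ b := by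
    intro a b hab
    rw [ZMod.natCast_eq_natCast_iff] at hab
    rw [pow_eq_pow_mod a hx, pow_eq_pow_mod b hx, hab]
  -- commutation relations
  have hyx : ∀ a : ℕ, y ^ a * x = x * y ^ (k * a) := by
    intro a
    have h1 : y * x = x * y ^ k := by
      have := congrArg (fun t => x * t) hconj
      simpa [mul_assoc] using this
    induction a with
    | zero => simp
    | succ a ih =>
        calc y ^ (a + 1) * x = y ^ a * (y * x) := by rw [pow_succ, mul_assoc]
          _ = y ^ a * x * y ^ k := by rw [h1, mul_assoc]
          _ = x * y ^ (k * a) * y ^ k := by rw [ih]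
          _ = x * y ^ (k * (a + 1)) := by
              rw [mul_assoc, ← pow_add, Nat.mul_succ]
  have hyxj : ∀ j : ℕ, y * x ^ j = x ^ j * y ^ (k ^ j) := by
    intro j
    induction j with
    | zero => simp
    | succ j ih =>
        calc y * x ^ (j + 1) = (y * x ^ j) * x := by rw [pow_succ, mul_assoc]
          _ = x ^ j * (y ^ (k ^ j) * x) := by rw [ih, mul_assoc]
          _ = x ^ j * (x * y ^ (k * k ^ j)) := by rw [hyx]
          _ = x ^ (j + 1) * y ^ (k ^ (j + 1)) := by
              rw [pow_succ, pow_succ, mul_assoc, Nat.mul_comm]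
  constructor
  · refine ⟨MonoidAlgebra.single y (1 : F) * w, hclosed y w hw, ?_⟩
    intro j i
    rw [MonoidAlgebra.coeff_single_mul_apply, one_mul]
    congr 1
    rw [inv_mul_eq_iff_eq_mul, ← mul_assoc, hyxj, mul_assoc, ← pow_add]
    refine congrArg _ (ypow _ _ ?_)
    push_cast
    simp only [ZMod.natCast_val, ZMod.cast_id]
    ring
  · refine ⟨MonoidAlgebra.single x (1 : F) * w, hclosed x w hw, ?_⟩
    intro j i
    rw [MonoidAlgebra.coeff_single_mul_apply, one_mul]
    congr 1
    rw [inv_mul_eq_iff_eq_mul, ← mul_assoc, ← pow_succ']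
    refine congrArg (· * y ^ i.val) (xpow _ _ ?_)
    push_cast
    simp only [ZMod.natCast_val, ZMod.cast_id]
    ring
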